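/- Let W be a real n×n matrix with W𝟙 = 𝟙 (row sums equal to 1), set η = ‖I − W‖ (the ℓ₂ operator norm), and let γ, ε ∈ ℝ. Let X, X̂, D ∈ ℝ^{n×p}, let x̄ = (1/n)𝟙ᵀX be the row-average of X, and set X⁺ = X − γ·(I − W)·X̂ − ε·D. Then ‖X⁺ − X‖² ≤ 3γ²η²‖X − X̂‖² + 3γ²η²‖X − 𝟙x̄‖² + 3ε²‖D‖², where ‖·‖ on n×p matrices is the Frobenius norm ‖Z‖ = (∑ᵢ ‖zᵢ‖²)^{1/2} with zᵢ the rows of Z. -/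

import Mathlib

set_option maxHeartbeats 1000000

/-- Frobenius norm of a real `n × p` matrix. -/
noncomputable def frobeniusNorm {n p : ℕ} (Z : Matrix (Fin n) (Fin p) ℝ) : ℝ :=
  Real.sqrt (∑ i, ∑ j, (Z i j) ^ 2)

lemma frobeniusNorm_sq {n p : ℕ} (Z : Matrix (Fin n) (Fin p) ℝ) :
    frobeniusNorm Z ^ 2 = ∑ i, ∑ j, (Z i j) ^ 2 := by
  rw [frobeniusNorm, Real.sq_sqrt (by positivity)]

lemma mulVec_sq_bound {n : ℕ} (A : Matrix (Fin n) (Fin n) ℝ) (v : Fin n → ℝ) :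
    ∑ i, (A.mulVec v i) ^ 2 ≤
      ‖(Matrix.toEuclideanCLM (𝕜 := ℝ) A : EuclideanSpace ℝ (Fin n) →L[ℝ] EuclideanSpace ℝ (Fin n))‖ ^ 2
        * ∑ i, (v i) ^ 2 := by
  set T := (Matrix.toEuclideanCLM (𝕜 := ℝ) A : EuclideanSpace ℝ (Fin n) →L[ℝ] EuclideanSpace ℝ (Fin n))
  set x : EuclideanSpace ℝ (Fin n) := (WithLp.equiv 2 _).symm v with hx
  have hTx : T x = (WithLp.equiv 2 _).symm (A.mulVec v) :=
    Matrix.toEuclideanCLM_toLp A v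
  have h1 : ‖T x‖ ≤ ‖T‖ * ‖x‖ := T.le_opNorm x
  have h2 : ‖T x‖ ^ 2 ≤ ‖T‖ ^ 2 * ‖x‖ ^ 2 := by
    rw [← mul_pow]; exact pow_le_pow_left₀ (norm_nonneg _) h1 2
  have hnx : ‖x‖ ^ 2 = ∑ i, (v i) ^ 2 := by
    rw [EuclideanSpace.norm_eq, Real.sq_sqrt (by positivity)]
    simp [hx, sq_abs]
  have hnTx : ‖T x‖ ^ 2 = ∑ i, (A.mulVec v i) ^ 2 := by
    rw [hTx, EuclideanSpace.norm_eq, Real.sq_sqrt (by positivity)]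
    simp [sq_abs]
  rw [← hnTx, ← hnx]; exact h2

/-- Frobenius-operator mixed bound: `∑∑ (A*M)ij² ≤ ‖A‖² ∑∑ Mij²`. -/
lemma mul_frob_sq_bound {n p : ℕ} (A : Matrix (Fin n) (Fin n) ℝ)
    (M : Matrix (Fin n) (Fin p) ℝ) :
    ∑ i, ∑ j, ((A * M) i j) ^ 2 ≤
      ‖(Matrix.toEuclideanCLM (𝕜 := ℝ) A : EuclideanSpace ℝ (Fin n) →L[ℝ] EuclideanSpace ℝ (Fin n))‖ ^ 2
        * ∑ i, ∑ j, (M i j) ^ 2 := by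
  rw [Finset.sum_comm, Finset.sum_comm (f := fun i j => (M i j) ^ 2), Finset.mul_sum]
  refine Finset.sum_le_sum fun j _ => ?_
  have h := mulVec_sq_bound A (fun i => M i j)
  have he : ∀ i, (A * M) i j = A.mulVec (fun k => M k j) i := by
    intro i; simp [Matrix.mul_apply, Matrix.mulVec, dotProduct]
  calc ∑ i, ((A * M) i j) ^ 2 = ∑ i, (A.mulVec (fun k => M k j) i) ^ 2 := by
        exact Finset.sum_congr rfl fun i _ => by rw [he i]
    _ ≤ _ := h

/-- One-step displacement bound for the decision-variable update of CONGO: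
with `W𝟙 = 𝟙`, `η = ‖I − W‖` (ℓ₂ operator norm) and `X⁺ = X − γ(I − W)X̂ − εD`,
`‖X⁺ − X‖² ≤ 3γ²η²‖X − X̂‖² + 3γ²η²‖X − 𝟙x̄‖² + 3ε²‖D‖²` in Frobenius norm. -/
theorem decision_update_displacement_bound (n p : ℕ) (W : Matrix (Fin n) (Fin n) ℝ)
    (hW : ∀ i, ∑ j, W i j = 1)
    (η γ ε : ℝ)
    (hη : η = ‖(Matrix.toEuclideanCLM (𝕜 := ℝ) (1 - W) : EuclideanSpace ℝ (Fin n) →L[ℝ] EuclideanSpace ℝ (Fin n))‖)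
    (X Xh D Xp : Matrix (Fin n) (Fin p) ℝ)
    (xbar : Fin p → ℝ) (hxbar : xbar = fun j => (1 / (n : ℝ)) * ∑ i, X i j)
    (hXp : Xp = X - γ • ((1 - W) * Xh) - ε • D) :
    frobeniusNorm (Xp - X) ^ 2
      ≤ 3 * γ ^ 2 * η ^ 2 * frobeniusNorm (X - Xh) ^ 2
        + 3 * γ ^ 2 * η ^ 2 * frobeniusNorm (X - Matrix.of fun _ j => xbar j) ^ 2
        + 3 * ε ^ 2 * frobeniusNorm D ^ 2 := by
  set M : Matrix (Fin n) (Fin p) ℝ := Matrix.of fun _ j => xbar j with hM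
  set U : Matrix (Fin n) (Fin p) ℝ := (1 - W) * (X - Xh) with hU
  set V : Matrix (Fin n) (Fin p) ℝ := (1 - W) * (M - X) with hV
  set Y : Matrix (Fin n) (Fin p) ℝ := (1 - W) * Xh with hY
  -- rows of (1 - W) sum to 0
  have hrow : ∀ i, ∑ k, (1 - W : Matrix (Fin n) (Fin n) ℝ) i k = 0 := by
    intro i
    simp only [Matrix.sub_apply, Finset.sum_sub_distrib, hW i]
    simp [Matrix.one_apply]
  -- (1 - W) * M = 0
  have hIM : (1 - W) * M = 0 := by
    ext i j
    simp only [Matrix.mul_apply, hM, Matrix.of_apply, Matrix.zero_apply]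
    rw [← Finset.sum_mul, hrow i, zero_mul]
  -- pointwise decomposition
  have h1 : ∀ i j, U i j + V i j = -(Y i j) := by
    intro i j
    have e1 : U = (1 - W) * X - Y := by rw [hU, hY, Matrix.mul_sub]
    have e2 : V = -((1 - W) * X) := by rw [hV, Matrix.mul_sub, hIM, zero_sub]
    rw [e1, e2]
    simp only [Matrix.sub_apply, Matrix.neg_apply]
    ring
  have hpt : ∀ i j, (Xp - X) i j = γ * U i j + γ * V i j + (-ε) * D i j := by
    intro i j
    rw [hXp]
    simp only [Matrix.sub_apply, Matrix.smul_apply, smul_eq_mul]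
    linear_combination (-γ) * h1 i j
  -- entrywise (a+b+c)² ≤ 3a²+3b²+3c², summed
  have hsum3 : ∑ i, ∑ j, ((Xp - X) i j) ^ 2 ≤
      ∑ i, ∑ j, (3 * γ ^ 2 * (U i j) ^ 2 + 3 * γ ^ 2 * (V i j) ^ 2 + 3 * ε ^ 2 * (D i j) ^ 2) := by
    refine Finset.sum_le_sum fun i _ => Finset.sum_le_sum fun j _ => ?_
    rw [hpt i j]
    nlinarith [sq_nonneg (γ * U i j - γ * V i j), sq_nonneg (γ * U i j + ε * D i j),
      sq_nonneg (γ * V i j + ε * D i j)]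
  have hexp : ∑ i, ∑ j, (3 * γ ^ 2 * (U i j) ^ 2 + 3 * γ ^ 2 * (V i j) ^ 2 + 3 * ε ^ 2 * (D i j) ^ 2)
      = 3 * γ ^ 2 * (∑ i, ∑ j, (U i j) ^ 2) + 3 * γ ^ 2 * (∑ i, ∑ j, (V i j) ^ 2)
        + 3 * ε ^ 2 * (∑ i, ∑ j, (D i j) ^ 2) := by
    simp only [Finset.sum_add_distrib, Finset.mul_sum]
  -- operator norm bounds
  have hU2 : ∑ i, ∑ j, (U i j) ^ 2 ≤ η ^ 2 * ∑ i, ∑ j, ((X - Xh) i j) ^ 2 := by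
    rw [hη, hU]; exact mul_frob_sq_bound (1 - W) (X - Xh)
  have hV2 : ∑ i, ∑ j, (V i j) ^ 2 ≤ η ^ 2 * ∑ i, ∑ j, ((X - M) i j) ^ 2 := by
    have hflip : ∑ i, ∑ j, ((M - X) i j) ^ 2 = ∑ i, ∑ j, ((X - M) i j) ^ 2 := by
      refine Finset.sum_congr rfl fun i _ => Finset.sum_congr rfl fun j _ => ?_
      simp only [Matrix.sub_apply]; ring
    rw [hη, hV, ← hflip]; exact mul_frob_sq_bound (1 - W) (M - X)
  rw [frobeniusNorm_sq, frobeniusNorm_sq, frobeniusNorm_sq, frobeniusNorm_sq]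
  have h3γ : (0:ℝ) ≤ 3 * γ ^ 2 := by positivity
  calc ∑ i, ∑ j, ((Xp - X) i j) ^ 2
      ≤ 3 * γ ^ 2 * (∑ i, ∑ j, (U i j) ^ 2) + 3 * γ ^ 2 * (∑ i, ∑ j, (V i j) ^ 2)
        + 3 * ε ^ 2 * (∑ i, ∑ j, (D i j) ^ 2) := by rw [← hexp]; exact hsum3
    _ ≤ 3 * γ ^ 2 * (η ^ 2 * ∑ i, ∑ j, ((X - Xh) i j) ^ 2)
        + 3 * γ ^ 2 * (η ^ 2 * ∑ i, ∑ j, ((X - M) i j) ^ 2)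
        + 3 * ε ^ 2 * (∑ i, ∑ j, (D i j) ^ 2) := by
        have b1 := mul_le_mul_of_nonneg_left hU2 h3γ
        have b2 := mul_le_mul_of_nonneg_left hV2 h3γ
        linarith
    _ = 3 * γ ^ 2 * η ^ 2 * ∑ i, ∑ j, ((X - Xh) i j) ^ 2
        + 3 * γ ^ 2 * η ^ 2 * ∑ i, ∑ j, ((X - M) i j) ^ 2
        + 3 * ε ^ 2 * ∑ i, ∑ j, (D i j) ^ 2 := by ring
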